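/- For β ∈ ℂ with Re β ≥ 0, the operator L↑_β defined by (L↑_β f)(z) = (1+z)^{−2β} f(z/(1+z)) is a bounded linear operator on H^∞(Π). Moreover, if β is real with β ≥ 0, then ‖(L↑_β)ⁿ‖ = 1 for every n ∈ ℕ, n ≥ 1. -/

import Mathlib

open Complex BoundedContinuousFunction
open scoped ENNReal

/-- The open right half-plane `Π = {z : ℂ | 0 < Re z}`. -/
def RHP : Set ℂ := {z : ℂ | 0 < z.re}

/-- Extension of a bounded continuous function on `Π` to `ℂ` (by zero off `Π`). -/
noncomputable def extFun (f : ↥RHP →ᵇ ℂ) : ℂ → ℂ :=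
  fun z => if h : 0 < z.re then f ⟨z, h⟩ else 0

/-- `H^∞(Π)`: the space of bounded holomorphic functions on `Π`, realised as the
submodule of the Banach space of bounded continuous functions on `Π` (with the
supremum norm) consisting of the holomorphic ones. -/
noncomputable def Hinf : Submodule ℂ (↥RHP →ᵇ ℂ) where
  carrier := {f | DifferentiableOn ℂ (extFun f) RHP}
  add_mem' := by
    intro f g hf hg
    refine (DifferentiableOn.add hf hg).congr (fun z hz => ?_)
    have hz' : 0 < z.re := hz
    simp only [extFun]
    simp only [extFun, Pi.add_apply, dif_pos hz']
    try rfl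
  zero_mem' := by
    refine (differentiableOn_const 0).congr (fun z hz => ?_)
    have hz' : 0 < z.re := hz
    simp only [extFun]
    rw [dif_pos hz']
    rfl
  smul_mem' := by
    intro c f hf
    refine (hf.const_smul c).congr (fun z hz => ?_)
    have hz' : 0 < z.re := hz
    simp only [extFun]
    simp only [extFun, Pi.smul_apply, dif_pos hz']
    try rfl

lemma mem_shift (z : ↥RHP) : (1 : ℂ) + z.1 ∈ RHP := by
  have hz := z.2
  simp only [RHP, Set.mem_setOf_eq, Complex.add_re, Complex.one_re] at *
  linarith

lemma mem_div (z : ↥RHP) : z.1 / (1 + z.1) ∈ RHP := by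
  have hz := z.2
  simp only [RHP, Set.mem_setOf_eq] at hz ⊢
  have hw : (1 + z.1) ≠ 0 := by
    intro h
    have h2 : (1 + z.1).re = 0 := by rw [h]; simp
    simp only [Complex.add_re, Complex.one_re] at h2
    linarith
  have hns : 0 < Complex.normSq (1 + z.1) := Complex.normSq_pos.mpr hw
  rw [Complex.div_re]
  have h1 : 0 < z.1.re * (1 + z.1).re := by
    simp only [Complex.add_re, Complex.one_re]
    nlinarith
  have h2 : 0 ≤ z.1.im * (1 + z.1).im := by
    simp only [Complex.add_im, Complex.one_im, zero_add]
    nlinarith [sq_nonneg z.1.im]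
  have := div_pos h1 hns
  have := div_nonneg h2 hns.le
  linarith

/-- Pointwise characterisation of the transfer operator
`(L↑_β f)(z) = (1+z)^(-2β) f(z/(1+z))` on `H^∞(Π)` (principal branch power). -/
def IsLup (β : ℂ) (T : ↥Hinf →L[ℂ] ↥Hinf) : Prop :=
  ∀ f : ↥Hinf, ∀ z : ↥RHP,
    (T f).1 z = (1 + z.1) ^ (-(2 * β)) * f.1 ⟨z.1 / (1 + z.1), mem_div z⟩

/-! ### Auxiliary lemmas -/

instance : Nonempty ↥RHP := ⟨⟨1, by simp [RHP]⟩⟩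

lemma one_lt_re_one_add (z : ↥RHP) : 1 < (1 + z.1).re := by
  have hz := z.2
  simp only [RHP, Set.mem_setOf_eq] at hz
  simp [Complex.add_re]
  linarith

lemma one_add_ne_zero (z : ↥RHP) : (1 : ℂ) + z.1 ≠ 0 := by
  intro h
  have := one_lt_re_one_add z
  rw [h] at this
  simp at this
  linarith

open Real in
lemma abs_weight_le {β : ℂ} (hβ : 0 ≤ β.re) {w : ℂ} (hw : 1 ≤ w.re) :
    ‖w ^ (-(2 * β))‖ ≤ Real.exp (π * |β.im|) := by
  have hw0 : w ≠ 0 := by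
    intro h; rw [h] at hw; simp at hw; linarith
  rw [Complex.norm_cpow_of_ne_zero hw0]
  have habs : 1 ≤ ‖w‖ := le_trans hw (Complex.re_le_norm w)
  have hre : (-(2 * β)).re ≤ 0 := by
    simp only [Complex.neg_re, Complex.mul_re]
    simp [Complex.re_ofNat, Complex.im_ofNat]
    nlinarith
  have hnum : ‖w‖ ^ (-(2 * β)).re ≤ 1 :=
    Real.rpow_le_one_of_one_le_of_nonpos habs hre
  have harg : |Complex.arg w| ≤ π / 2 :=
    Complex.abs_arg_le_pi_div_two_iff.mpr (by linarith)
  have him : (-(2 * β)).im = -(2 * β.im) := by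
    simp [Complex.mul_im, Complex.re_ofNat, Complex.im_ofNat]
  have hlow : -(π * |β.im|) ≤ Complex.arg w * (-(2 * β)).im := by
    rw [him]
    have h1 : |Complex.arg w * (-(2 * β.im))| ≤ (π / 2) * (2 * |β.im|) := by
      rw [abs_mul]
      exact mul_le_mul harg (by rw [abs_neg, abs_mul]; simp) (abs_nonneg _)
        (by positivity)
    have h2 := neg_abs_le (Complex.arg w * (-(2 * β.im)))
    nlinarith
  have he : Real.exp (-(π * |β.im|)) ≤ Real.exp (Complex.arg w * (-(2 * β)).im) :=
    Real.exp_le_exp.mpr hlow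
  have hepos : 0 < Real.exp (-(π * |β.im|)) := Real.exp_pos _
  calc ‖w‖ ^ (-(2 * β)).re / Real.exp (Complex.arg w * (-(2 * β)).im)
      ≤ 1 / Real.exp (-(π * |β.im|)) := div_le_div₀ zero_le_one hnum hepos he
    _ = Real.exp (π * |β.im|) := by rw [one_div, ← Real.exp_neg, neg_neg]

/-- The underlying bounded continuous function of `L↑_β f`. -/
noncomputable def LupBCF (β : ℂ) (hβ : 0 ≤ β.re) (f : ↥RHP →ᵇ ℂ) : ↥RHP →ᵇ ℂ :=
  BoundedContinuousFunction.ofNormedAddCommGroup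
    (fun z : ↥RHP => (1 + z.1) ^ (-(2 * β)) * f ⟨z.1 / (1 + z.1), mem_div z⟩)
    (by
      apply Continuous.mul
      · apply Continuous.cpow
        · exact continuous_const.add continuous_subtype_val
        · exact continuous_const
        · intro z
          exact Complex.mem_slitPlane_iff.mpr (Or.inl (by linarith [one_lt_re_one_add z]))
      · exact f.continuous.comp
          (Continuous.subtype_mk
            (continuous_subtype_val.div (continuous_const.add continuous_subtype_val)
              (fun z => one_add_ne_zero z)) _))
    (Real.exp (Real.pi * |β.im|) * ‖f‖)
    (by
      intro z
      rw [norm_mul]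
      exact mul_le_mul (abs_weight_le hβ (one_lt_re_one_add z).le)
        (f.norm_coe_le_norm _) (norm_nonneg _)
        (Real.exp_pos _).le)

@[simp] lemma LupBCF_apply (β : ℂ) (hβ : 0 ≤ β.re) (f : ↥RHP →ᵇ ℂ) (z : ↥RHP) :
    LupBCF β hβ f z = (1 + z.1) ^ (-(2 * β)) * f ⟨z.1 / (1 + z.1), mem_div z⟩ := rfl


lemma slit_of_RHP {w : ℂ} (hw : 0 < w.re) : w ∈ Complex.slitPlane :=
  Complex.mem_slitPlane_iff.mpr (Or.inl hw)

lemma LupBCF_mem (β : ℂ) (hβ : 0 ≤ β.re) (f : ↥RHP →ᵇ ℂ) (hf : f ∈ Hinf) :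
    LupBCF β hβ f ∈ Hinf := by
  show DifferentiableOn ℂ (extFun (LupBCF β hβ f)) RHP
  have hf' : DifferentiableOn ℂ (extFun f) RHP := hf
  have hmap : DifferentiableOn ℂ (fun z : ℂ => z / (1 + z)) RHP := by
    intro z hz
    have hz' : 0 < z.re := hz
    have hne : (1 : ℂ) + z ≠ 0 := by
      intro h
      have := congrArg Complex.re h
      simp [Complex.add_re] at this
      linarith
    exact (DifferentiableAt.div differentiableAt_id
      ((differentiableAt_const _).add differentiableAt_id) hne).differentiableWithinAt
  have hmaps : Set.MapsTo (fun z : ℂ => z / (1 + z)) RHP RHP := by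
    intro z hz
    exact mem_div ⟨z, hz⟩
  have h1 : DifferentiableOn ℂ (fun z : ℂ => (1 + z) ^ (-(2 * β))) RHP := by
    intro z hz
    have hz' : 0 < z.re := hz
    have hslit : (1 : ℂ) + z ∈ Complex.slitPlane :=
      slit_of_RHP (by simp [Complex.add_re]; linarith)
    exact (((differentiableAt_const _).add differentiableAt_id).cpow
      (differentiableAt_const _) hslit).differentiableWithinAt
  have h2 : DifferentiableOn ℂ (fun z : ℂ => extFun f (z / (1 + z))) RHP :=
    hf'.comp hmap hmaps
  refine (h1.mul h2).congr (fun z hz => ?_)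
  have hz' : 0 < z.re := hz
  have hd : 0 < (z / (1 + z)).re := mem_div ⟨z, hz'⟩
  simp only [extFun]
  simp only [Pi.mul_apply, dif_pos hd, dif_pos hz']
  rfl

/-- The linear map underlying `L↑_β`. -/
noncomputable def LupLin (β : ℂ) (hβ : 0 ≤ β.re) : ↥Hinf →ₗ[ℂ] ↥Hinf where
  toFun f := ⟨LupBCF β hβ f.1, LupBCF_mem β hβ f.1 f.2⟩
  map_add' f g := by
    apply Subtype.ext
    apply BoundedContinuousFunction.ext
    intro z
    show LupBCF β hβ (f.1 + g.1) z = (LupBCF β hβ f.1 + LupBCF β hβ g.1) z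
    simp [mul_add]
  map_smul' c f := by
    apply Subtype.ext
    apply BoundedContinuousFunction.ext
    intro z
    show LupBCF β hβ (c • f.1) z = (c • LupBCF β hβ f.1) z
    simp [LupBCF_apply]
    ring

lemma norm_LupLin_le (β : ℂ) (hβ : 0 ≤ β.re) (f : ↥Hinf) :
    ‖LupLin β hβ f‖ ≤ Real.exp (Real.pi * |β.im|) * ‖f‖ := by
  show ‖LupBCF β hβ f.1‖ ≤ Real.exp (Real.pi * |β.im|) * ‖f.1‖
  exact BoundedContinuousFunction.norm_ofNormedAddCommGroup_le _
    (mul_nonneg (Real.exp_pos _).le (norm_nonneg _)) _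

/-- `L↑_β` as a continuous linear operator. -/
noncomputable def Lup (β : ℂ) (hβ : 0 ≤ β.re) : ↥Hinf →L[ℂ] ↥Hinf :=
  LinearMap.mkContinuous (LupLin β hβ) (Real.exp (Real.pi * |β.im|)) (norm_LupLin_le β hβ)

lemma Lup_isLup (β : ℂ) (hβ : 0 ≤ β.re) : IsLup β (Lup β hβ) := fun f z => rfl

/-! ### Part 2 helpers -/

lemma cpow_mul_cpow {b c : ℂ} (hb : 0 < b.re) (hc : 0 < c.re) (w : ℂ) :
    b ^ w * c ^ w = (b * c) ^ w := by
  have hb0 : b ≠ 0 := Complex.slitPlane_ne_zero (slit_of_RHP hb)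
  have hc0 : c ≠ 0 := Complex.slitPlane_ne_zero (slit_of_RHP hc)
  have hargb : |Complex.arg b| < Real.pi / 2 :=
    Complex.abs_arg_lt_pi_div_two_iff.mpr (Or.inl hb)
  have hargc : |Complex.arg c| < Real.pi / 2 :=
    Complex.abs_arg_lt_pi_div_two_iff.mpr (Or.inl hc)
  have habs := abs_lt.mp hargb
  have habs' := abs_lt.mp hargc
  have hmem : Complex.arg b + Complex.arg c ∈ Set.Ioc (-Real.pi) Real.pi := by
    constructor <;> [linarith [habs.1, habs'.1]; linarith [habs.2, habs'.2]]
  rw [Complex.cpow_def_of_ne_zero hb0, Complex.cpow_def_of_ne_zero hc0,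
    Complex.cpow_def_of_ne_zero (mul_ne_zero hb0 hc0), ← Complex.exp_add,
    Complex.log_mul hb0 hc0 hmem, add_mul]

lemma mem_div_n (n : ℕ) (z : ↥RHP) : z.1 / (1 + (n : ℂ) * z.1) ∈ RHP := by
  have hz : 0 < z.1.re := z.2
  set a := z.1 with ha
  have hbre : (1 + (n : ℂ) * a).re = 1 + (n : ℝ) * a.re := by
    simp [Complex.add_re, Complex.mul_re]
  have hbim : (1 + (n : ℂ) * a).im = (n : ℝ) * a.im := by
    simp [Complex.add_im, Complex.mul_im]
  have hn0 : (0 : ℝ) ≤ n := Nat.cast_nonneg n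
  have hbre' : 0 < (1 + (n : ℂ) * a).re := by rw [hbre]; nlinarith
  have hb0 : (1 + (n : ℂ) * a) ≠ 0 := Complex.slitPlane_ne_zero (slit_of_RHP hbre')
  have hns : 0 < Complex.normSq (1 + (n : ℂ) * a) := Complex.normSq_pos.mpr hb0
  show 0 < (a / (1 + (n : ℂ) * a)).re
  rw [Complex.div_re]
  have h1 : 0 < a.re * (1 + (n : ℂ) * a).re := mul_pos hz hbre'
  have h2 : 0 ≤ a.im * (1 + (n : ℂ) * a).im := by
    rw [hbim]; nlinarith [sq_nonneg a.im]
  have := div_pos h1 hns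
  have := div_nonneg h2 hns.le
  linarith

lemma one_add_n_ne_zero (n : ℕ) (z : ↥RHP) : (1 : ℂ) + (n : ℂ) * z.1 ≠ 0 := by
  have hz : 0 < z.1.re := z.2
  have hbre : (1 + (n : ℂ) * z.1).re = 1 + (n : ℝ) * z.1.re := by
    simp [Complex.add_re, Complex.mul_re]
  have hn0 : (0 : ℝ) ≤ n := Nat.cast_nonneg n
  have : 0 < (1 + (n : ℂ) * z.1).re := by rw [hbre]; nlinarith
  exact Complex.slitPlane_ne_zero (slit_of_RHP this)

lemma re_pos_one_add_n (n : ℕ) (z : ↥RHP) : 0 < ((1 : ℂ) + (n : ℂ) * z.1).re := by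
  have hz : 0 < z.1.re := z.2
  have hbre : (1 + (n : ℂ) * z.1).re = 1 + (n : ℝ) * z.1.re := by
    simp [Complex.add_re, Complex.mul_re]
  have hn0 : (0 : ℝ) ≤ n := Nat.cast_nonneg n
  rw [hbre]; nlinarith

lemma pow_formula {β : ℂ} {T : ↥Hinf →L[ℂ] ↥Hinf} (hT : IsLup β T) (n : ℕ) (f : ↥Hinf)
    (z : ↥RHP) :
    ((T ^ n) f).1 z
      = (1 + (n : ℂ) * z.1) ^ (-(2 * β)) * f.1 ⟨z.1 / (1 + (n : ℂ) * z.1), mem_div_n n z⟩ := by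
  induction n generalizing f with
  | zero =>
    simp only [pow_zero, Nat.cast_zero, zero_mul, add_zero, ContinuousLinearMap.one_apply]
    rw [Complex.one_cpow, one_mul]
    exact congrArg (fun t : ↥RHP => f.1 t) (Subtype.ext (div_one z.1).symm)
  | succ n ih =>
    have hpow : T ^ (n + 1) = (T ^ n) * T := pow_succ T n
    rw [hpow]
    have h1 : ((T ^ n * T) f) = (T ^ n) (T f) := rfl
    rw [h1, ih (T f)]
    set u : ↥RHP := ⟨z.1 / (1 + (n : ℂ) * z.1), mem_div_n n z⟩ with hu
    rw [hT f u]
    have hb0 : (1 : ℂ) + (n : ℂ) * z.1 ≠ 0 := one_add_n_ne_zero n z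
    have hb10 : (1 : ℂ) + ((n : ℂ) + 1) * z.1 ≠ 0 := by
      have h := one_add_n_ne_zero (n + 1) z
      push_cast at h
      exact h
    have huval : (1 : ℂ) + u.1 = (1 + ((n : ℂ) + 1) * z.1) / (1 + (n : ℂ) * z.1) := by
      rw [hu]
      show (1 : ℂ) + z.1 / (1 + (n : ℂ) * z.1) = _
      rw [eq_div_iff hb0, add_mul, div_mul_cancel₀ _ hb0]
      ring
    have hinner : u.1 / (1 + u.1) = z.1 / (1 + ((n : ℂ) + 1) * z.1) := by
      rw [huval, hu]
      exact div_div_div_cancel_right₀ hb0 _ _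
    have hcre : 0 < ((1 : ℂ) + u.1).re := by
      have := mem_shift u
      simpa [RHP] using this
    have hmul : (1 + (n : ℂ) * z.1) ^ (-(2 * β)) * ((1 : ℂ) + u.1) ^ (-(2 * β))
        = (1 + ((n : ℂ) + 1) * z.1) ^ (-(2 * β)) := by
      rw [cpow_mul_cpow (re_pos_one_add_n n z) hcre]
      congr 1
      rw [huval]
      field_simp
    have hcast : ((n + 1 : ℕ) : ℂ) = (n : ℂ) + 1 := by push_cast; ring
    rw [← mul_assoc, hmul]
    simp only [Nat.cast_add, Nat.cast_one]
    have harg : (⟨u.1 / (1 + u.1), mem_div u⟩ : ↥RHP)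
        = ⟨z.1 / (1 + ((n : ℂ) + 1) * z.1), hinner ▸ mem_div u⟩ := Subtype.ext hinner
    rw [harg]

/-- The constant function `1` as an element of `H^∞`. -/
noncomputable def oneH : ↥Hinf :=
  ⟨BoundedContinuousFunction.const _ (1 : ℂ), by
    show DifferentiableOn ℂ (extFun _) RHP
    refine (differentiableOn_const 1).congr (fun z hz => ?_)
    have hz' : 0 < z.re := hz
    simp only [extFun]
    rw [dif_pos hz']
    rfl⟩

lemma norm_oneH : ‖oneH‖ = 1 := by
  show ‖BoundedContinuousFunction.const (↥RHP) (1 : ℂ)‖ = 1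
  rw [BoundedContinuousFunction.norm_const_eq]
  simp

lemma abs_weight_real_le {β : ℝ} (hβ : 0 ≤ β) {w : ℂ} (hw0 : w ≠ 0) (habs : 1 ≤ ‖w‖) :
    ‖w ^ (-(2 * (β : ℂ)))‖ ≤ 1 := by
  rw [Complex.norm_cpow_of_ne_zero hw0]
  have him : (-(2 * (β : ℂ))).im = 0 := by
    simp [Complex.mul_im]
  have hre : (-(2 * (β : ℂ))).re = -(2 * β) := by
    simp [Complex.mul_re]
  rw [him, hre, mul_zero, Real.exp_zero, div_one]
  exact Real.rpow_le_one_of_one_le_of_nonpos habs (by linarith)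

set_option maxHeartbeats 1000000 in
/-- For `Re β ≥ 0` the operator `(L↑_β f)(z) = (1+z)^{-2β} f(z/(1+z))` is a
bounded linear operator on `H^∞(Π)`; moreover, for real `β ≥ 0`, `‖(L↑_β)ⁿ‖ = 1` for all
`n ≥ 1`. -/
theorem Lup_bounded_and_power_norm_one :
    (∀ β : ℂ, 0 ≤ β.re → ∃ T : ↥Hinf →L[ℂ] ↥Hinf, IsLup β T) ∧
    (∀ β : ℝ, 0 ≤ β → ∀ T : ↥Hinf →L[ℂ] ↥Hinf, IsLup (β : ℂ) T →
      ∀ n : ℕ, 1 ≤ n → ‖T ^ n‖ = 1) := by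
  constructor
  · intro β hβ
    exact ⟨Lup β hβ, Lup_isLup β hβ⟩
  · intro β hβ T hT n hn
    -- upper bound: ‖T‖ ≤ 1
    have hTle : ‖T‖ ≤ 1 := by
      apply ContinuousLinearMap.opNorm_le_bound T zero_le_one
      intro f
      rw [one_mul]
      show ‖(T f).1‖ ≤ ‖f.1‖
      rw [BoundedContinuousFunction.norm_le (norm_nonneg _)]
      intro z
      rw [hT f z]
      have h1 : ‖(1 + z.1) ^ (-(2 * (β : ℂ)))‖ ≤ 1 :=
        abs_weight_real_le hβ (one_add_ne_zero z)
          (le_trans (one_lt_re_one_add z).le (Complex.re_le_norm _))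
      calc ‖(1 + z.1) ^ (-(2 * (β : ℂ))) * f.1 ⟨z.1 / (1 + z.1), mem_div z⟩‖
          ≤ 1 * ‖f.1‖ := by
            rw [norm_mul]
            exact mul_le_mul h1 (f.1.norm_coe_le_norm _) (norm_nonneg _) zero_le_one
        _ = ‖f.1‖ := one_mul _
    have hupper : ‖T ^ n‖ ≤ 1 := by
      have h1n : ‖T‖ ^ n ≤ 1 := pow_le_one₀ (norm_nonneg T) hTle
      calc ‖T ^ n‖ ≤ ‖T‖ ^ n := norm_pow_le' T hn
        _ ≤ 1 := h1n
    -- lower bound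
    have hkey : ∀ x : ℝ, 0 < x → (1 + (n : ℝ) * x) ^ (-(2 * β)) ≤ ‖(T ^ n) oneH‖ := by
      intro x hx
      set zx : ↥RHP := ⟨(x : ℂ), by simpa [RHP] using hx⟩ with hzx
      have hval := pow_formula hT n oneH zx
      have hone : oneH.1 ⟨zx.1 / (1 + (n : ℂ) * zx.1), mem_div_n n zx⟩ = 1 := rfl
      have hbase : (1 : ℂ) + (n : ℂ) * zx.1 = ((1 + (n : ℝ) * x : ℝ) : ℂ) := by
        push_cast
        rfl
      have hxpos : (0 : ℝ) < 1 + (n : ℝ) * x := by positivity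
      have habs : ‖((T ^ n) oneH).1 zx‖ = (1 + (n : ℝ) * x) ^ (-(2 * β)) := by
        rw [hval, hone, mul_one, hbase]
        rw [show ‖(((1 + (n : ℝ) * x : ℝ) : ℂ)) ^ (-(2 * (β : ℂ)))‖
            = ‖(((1 + (n : ℝ) * x : ℝ) : ℂ)) ^ (-(2 * (β : ℂ)))‖ from rfl]
        rw [Complex.norm_cpow_eq_rpow_re_of_pos hxpos]
        congr 1
        simp [Complex.mul_re]
      calc (1 + (n : ℝ) * x) ^ (-(2 * β)) = ‖((T ^ n) oneH).1 zx‖ := habs.symm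
        _ ≤ ‖((T ^ n) oneH).1‖ := BoundedContinuousFunction.norm_coe_le_norm _ _
        _ = ‖(T ^ n) oneH‖ := rfl
    have htend : Filter.Tendsto (fun x : ℝ => (1 + (n : ℝ) * x) ^ (-(2 * β)))
        (nhdsWithin 0 (Set.Ioi 0)) (nhds 1) := by
      have hc : ContinuousAt (fun x : ℝ => (1 + (n : ℝ) * x) ^ (-(2 * β))) 0 := by
        apply ContinuousAt.rpow_const
        · exact (continuous_const.add (continuous_const.mul continuous_id)).continuousAt
        · left
          simp
      have h0 : (fun x : ℝ => (1 + (n : ℝ) * x) ^ (-(2 * β))) 0 = 1 := by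
        simp
      have h2 := hc.continuousWithinAt (s := Set.Ioi (0 : ℝ))
      rw [ContinuousWithinAt] at h2
      simpa using h2
    have hlower : 1 ≤ ‖(T ^ n) oneH‖ := by
      apply le_of_tendsto htend
      filter_upwards [self_mem_nhdsWithin] with x hx
      exact hkey x hx
    have hle2 : ‖(T ^ n) oneH‖ ≤ ‖T ^ n‖ := by
      calc ‖(T ^ n) oneH‖ ≤ ‖T ^ n‖ * ‖oneH‖ := (T ^ n).le_opNorm oneH
        _ = ‖T ^ n‖ := by rw [norm_oneH, mul_one]
    linarith
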